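/- In a qubit system, the unbiased two-outcome POVM A = ((1/2)(I + λ·σ), (1/2)(I − λ·σ)), where λ ∈ ℝ³ with |λ| ≤ 1 and σ = (σ₁,σ₂,σ₃) are the Pauli matrices, is α-sharp if and only if α ≤ (1 + |λ|²)/2. Equivalently, the maximum of ‖b‖_∞ over positive semidefinite 2×2 operators b satisfying b ≤ (1/2)(I + λ·σ) and b ≤ (1/2)(I − λ·σ) equals (1 − |λ|²)/2. -/

import Mathlib

open scoped ComplexOrder

/-- The Pauli matrices. -/
def pauli1 : Matrix (Fin 2) (Fin 2) ℂ := !![0, 1; 1, 0]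
def pauli2 : Matrix (Fin 2) (Fin 2) ℂ := !![0, -Complex.I; Complex.I, 0]
def pauli3 : Matrix (Fin 2) (Fin 2) ℂ := !![1, 0; 0, -1]

private lemma psd2_elim {M : Matrix (Fin 2) (Fin 2) ℂ} (h : M.PosSemidef) :
    M 1 0 = starRingEnd ℂ (M 0 1) ∧ (M 0 0).im = 0 ∧ (M 1 1).im = 0 ∧
    0 ≤ (M 0 0).re ∧ 0 ≤ (M 1 1).re ∧
    Complex.normSq (M 0 1) ≤ (M 0 0).re * (M 1 1).re := by
  have herm := h.1
  have h10 : M 1 0 = starRingEnd ℂ (M 0 1) := by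
    have := congrFun (congrFun herm 1) 0
    simpa [Matrix.conjTranspose_apply] using this.symm
  have h00 : starRingEnd ℂ (M 0 0) = M 0 0 := by
    have := congrFun (congrFun herm 0) 0
    simpa [Matrix.conjTranspose_apply] using this
  have h11 : starRingEnd ℂ (M 1 1) = M 1 1 := by
    have := congrFun (congrFun herm 1) 1
    simpa [Matrix.conjTranspose_apply] using this
  have him0 : (M 0 0).im = 0 := by
    have := congrArg Complex.im h00
    simp [Complex.conj_im] at this; linarith
  have him1 : (M 1 1).im = 0 := by
    have := congrArg Complex.im h11
    simp [Complex.conj_im] at this; linarith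
  have hd0 : 0 ≤ (M 0 0).re := by
    have := h.dotProduct_mulVec_nonneg (Pi.single 0 1)
    rw [Complex.le_def] at this
    simpa [Matrix.mulVec, dotProduct, Fin.sum_univ_two, Pi.single] using this.1
  have hd1 : 0 ≤ (M 1 1).re := by
    have := h.dotProduct_mulVec_nonneg (Pi.single 1 1)
    rw [Complex.le_def] at this
    simpa [Matrix.mulVec, dotProduct, Fin.sum_univ_two, Pi.single] using this.1
  refine ⟨h10, him0, him1, hd0, hd1, ?_⟩
  have hdet : M.det = ((∏ i, h.1.eigenvalues i : ℝ) : ℂ) := by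
    rw [h.1.det_eq_prod_eigenvalues]; push_cast; rfl
  have hdet2 : M.det = M 0 0 * M 1 1 - M 0 1 * M 1 0 := Matrix.det_fin_two M
  have hprod : (0:ℝ) ≤ ∏ i, h.1.eigenvalues i :=
    Finset.prod_nonneg fun i _ => h.eigenvalues_nonneg i
  have := congrArg Complex.re (hdet2.symm.trans hdet)
  rw [h10] at this
  simp [Complex.sub_re, Complex.mul_re, Complex.conj_re, Complex.conj_im, him0, him1,
    Complex.normSq_apply] at this
  rw [Fin.prod_univ_two] at hprod
  rw [Complex.normSq_apply]
  nlinarith [hprod]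

private lemma le_of_sq' {a b : ℝ} (h : a^2 ≤ b^2) (hb : 0 ≤ b) : a ≤ b := by
  nlinarith [h, hb]

private lemma psd2_mk {M : Matrix (Fin 2) (Fin 2) ℂ} {p q : ℝ}
    (h00 : M 0 0 = (p : ℂ)) (h11 : M 1 1 = (q : ℂ))
    (h10 : M 1 0 = starRingEnd ℂ (M 0 1))
    (hp : 0 ≤ p) (hq : 0 ≤ q)
    (hdet : Complex.normSq (M 0 1) ≤ p * q) : M.PosSemidef := by
  rw [Matrix.posSemidef_iff_dotProduct_mulVec]
  constructor
  · ext i j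
    fin_cases i <;> fin_cases j <;>
      simp [Matrix.conjTranspose_apply, h00, h11, h10]
  · intro x
    have hform : dotProduct (star x) (M.mulVec x) =
        starRingEnd ℂ (x 0) * (M 0 0 * x 0 + M 0 1 * x 1)
        + starRingEnd ℂ (x 1) * (M 1 0 * x 0 + M 1 1 * x 1) := by
      simp [Matrix.mulVec, dotProduct, Fin.sum_univ_two]
    rw [Complex.le_def, hform, h00, h11, h10]
    set z := M 0 1 with hz
    obtain ⟨zr, zi⟩ := z
    obtain ⟨a, b⟩ := x 0
    obtain ⟨c, d⟩ := x 1
    simp [Complex.normSq_apply] at hdet ⊢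
    constructor
    · have hA : (0:ℝ) ≤ a^2+b^2 := by positivity
      have hC : (0:ℝ) ≤ c^2+d^2 := by positivity
      have hAC : (0:ℝ) ≤ (a^2+b^2)*(c^2+d^2) := mul_nonneg hA hC
      have hdet' : (0:ℝ) ≤ p*q - (zr^2+zi^2) := by nlinarith [hdet]
      have hprod : (0:ℝ) ≤ (p*q - (zr^2+zi^2)) * ((a^2+b^2)*(c^2+d^2)) :=
        mul_nonneg hdet' hAC
      set R : ℝ := zr*(a*c+b*d) - zi*(a*d - b*c) with hR
      set S : ℝ := zr*(a*d-b*c) + zi*(a*c+b*d) with hS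
      have hRS : R^2 + S^2 = (zr^2+zi^2)*((a^2+b^2)*(c^2+d^2)) := by
        rw [hR, hS]; ring
      have hR2 : (2*R)^2 ≤ 4*(p*q)*((a^2+b^2)*(c^2+d^2)) := by
        nlinarith [hRS, sq_nonneg S, hprod]
      have hAMGM : 4*(p*q)*((a^2+b^2)*(c^2+d^2)) ≤ (p*(a^2+b^2) + q*(c^2+d^2))^2 := by
        nlinarith [sq_nonneg (p*(a^2+b^2) - q*(c^2+d^2))]
      have hPQ : (0:ℝ) ≤ p*(a^2+b^2) + q*(c^2+d^2) :=
        add_nonneg (mul_nonneg hp hA) (mul_nonneg hq hC)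
      have key : -(2*R) ≤ p*(a^2+b^2) + q*(c^2+d^2) := by
        refine le_of_sq' ?_ hPQ
        calc (-(2*R))^2 = (2*R)^2 := by ring
          _ ≤ 4*(p*q)*((a^2+b^2)*(c^2+d^2)) := hR2
          _ ≤ _ := hAMGM
      linarith [key]
    · ring

set_option maxHeartbeats 1600000 in
private lemma key_scalar (l3 k p q t r : ℝ) (hk : 0 ≤ k) (hs : l3^2 + 4*k ≤ 1)
    (hp : 0 ≤ p) (hq : 0 ≤ q) (ht : 0 ≤ t) (hpq : t ≤ p*q)
    (hb1 : p ≤ (1+l3)/2) (hb2 : q ≤ (1-l3)/2) (hb3 : p ≤ (1-l3)/2) (hb4 : q ≤ (1+l3)/2)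
    (hd1 : k + t - 2*r ≤ ((1+l3)/2 - p)*((1-l3)/2 - q))
    (hd2 : k + t + 2*r ≤ ((1-l3)/2 - p)*((1+l3)/2 - q)) :
    p ≤ (1 - l3^2 - 4*k)/2 ∧ q ≤ (1 - l3^2 - 4*k)/2 ∧
      t ≤ ((1 - l3^2 - 4*k)/2 - p)*((1 - l3^2 - 4*k)/2 - q) := by
  have hs2nn : (0:ℝ) ≤ l3^2 + 4*k := by positivity
  have hGnn : (0:ℝ) ≤ (p-q)^2/4 + t := by positivity
  set G : ℝ := Real.sqrt ((p-q)^2/4 + t) with hG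
  have hG0 : 0 ≤ G := Real.sqrt_nonneg _
  have hG2 : G^2 = (p-q)^2/4 + t := Real.sq_sqrt hGnn
  clear_value G
  clear hG
  have hT2 : (l3^2 + 4*k) + 4*G^2 ≤ (1-p-q)^2 := by nlinarith [hd1, hd2, hG2]
  have hGc : 2*G ≤ p + q := by
    refine le_of_sq' ?_ (by linarith)
    nlinarith [hG2, hpq]
  clear hd1 hd2 hpq hb3 hb4
  have hTpos : 0 ≤ 1 - p - q := by linarith
  have hTG : 1 - p - q ≤ 1 - 2*G := by linarith
  have h1 : (1-p-q)^2 ≤ (1-2*G)^2 := by nlinarith [hTpos, hTG]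
  have hGm : 4*G ≤ 1 - (l3^2 + 4*k) := by nlinarith [hT2, h1]
  have hfinal : 2*G + (l3^2 + 4*k) ≤ 1 - p - q := by
    refine le_of_sq' ?_ hTpos
    nlinarith [hT2, mul_nonneg hs2nn (by linarith : (0:ℝ) ≤ 1 - (l3^2+4*k) - 4*G)]
  have habs1 : p - q ≤ 2*G := by
    refine le_of_sq' ?_ (by linarith)
    nlinarith [hG2, ht]
  have habs2 : q - p ≤ 2*G := by
    refine le_of_sq' ?_ (by linarith)
    nlinarith [hG2, ht]
  have hu : 4*G^2 ≤ (1 - (l3^2+4*k) - p - q)^2 := by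
    nlinarith [hfinal, hG0]
  refine ⟨by linarith, by linarith, ?_⟩
  nlinarith [hu, hG2]

set_option maxHeartbeats 1600000 in
/-- the unbiased qubit two-outcome POVM
`((1/2)(I + λ·σ), (1/2)(I - λ·σ))` with `|λ| ≤ 1` is `α`-sharp iff `α ≤ (1 + |λ|²)/2`.
Here `α`-sharpness means: every positive semidefinite `c` below both effects in the Loewner
order satisfies `c ≤ (1 - α)·I`. -/
theorem unbiased_qubit_measurement_sharpness (l : Fin 3 → ℝ)
    (hl : l 0 ^ 2 + l 1 ^ 2 + l 2 ^ 2 ≤ 1) (α : ℝ)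
    (a : Matrix (Fin 2) (Fin 2) ℂ)
    (hadef : a = (1 / 2 : ℝ) • ((1 : Matrix (Fin 2) (Fin 2) ℂ)
      + l 0 • pauli1 + l 1 • pauli2 + l 2 • pauli3)) :
    (∀ c : Matrix (Fin 2) (Fin 2) ℂ, c.PosSemidef → (a - c).PosSemidef →
        ((1 - a) - c).PosSemidef →
        ((1 - α) • (1 : Matrix (Fin 2) (Fin 2) ℂ) - c).PosSemidef) ↔
      α ≤ (1 + (l 0 ^ 2 + l 1 ^ 2 + l 2 ^ 2)) / 2 := by
  have ha00 : a 0 0 = (((1 + l 2)/2 : ℝ) : ℂ) := by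
    subst hadef
    simp [pauli1, pauli2, pauli3, Matrix.add_apply, Matrix.smul_apply, Matrix.one_apply,
      Complex.real_smul, Complex.ext_iff]
    first | (constructor <;> ring) | ring
  have ha11 : a 1 1 = (((1 - l 2)/2 : ℝ) : ℂ) := by
    subst hadef
    simp [pauli1, pauli2, pauli3, Matrix.add_apply, Matrix.smul_apply, Matrix.one_apply,
      Complex.real_smul, Complex.ext_iff]
    first | (constructor <;> ring) | ring
  have ha01 : a 0 1 = Complex.mk (l 0 / 2) (-(l 1) / 2) := by
    subst hadef
    simp [pauli1, pauli2, pauli3, Matrix.add_apply, Matrix.smul_apply, Matrix.one_apply,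
      Complex.real_smul, Complex.ext_iff]
    first | (constructor <;> ring) | ring
  have ha10 : a 1 0 = Complex.mk (l 0 / 2) (l 1 / 2) := by
    subst hadef
    simp [pauli1, pauli2, pauli3, Matrix.add_apply, Matrix.smul_apply, Matrix.one_apply,
      Complex.real_smul, Complex.ext_iff]
    first | (constructor <;> ring) | ring
  constructor
  · -- sharpness condition implies the bound on α
    intro H
    obtain ⟨wr, wi, hwn, hw0⟩ : ∃ wr wi : ℝ, wr^2 + wi^2 = 1 ∧ l 0 * wr + l 1 * wi = 0 := by
      rcases eq_or_lt_of_le (by positivity : (0:ℝ) ≤ l 0^2 + l 1^2) with h | h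
      · have h0 : l 0 = 0 := by nlinarith
        have h1 : l 1 = 0 := by nlinarith
        exact ⟨1, 0, by ring, by rw [h0, h1]; ring⟩
      · have hρ0 : (0:ℝ) < Real.sqrt (l 0^2 + l 1^2) := Real.sqrt_pos.2 h
        have hρ2 : (Real.sqrt (l 0^2 + l 1^2))^2 = l 0^2 + l 1^2 := Real.sq_sqrt h.le
        refine ⟨-(l 1)/Real.sqrt (l 0^2 + l 1^2), l 0/Real.sqrt (l 0^2 + l 1^2), ?_, ?_⟩
        · field_simp
          linarith [hρ2]
        · field_simp
          ring
    set m : ℝ := (1 - (l 0^2 + l 1^2 + l 2^2))/2 with hm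
    have hm0 : 0 ≤ m := by rw [hm]; linarith
    set c : Matrix (Fin 2) (Fin 2) ℂ :=
      !![((m/2 : ℝ) : ℂ), Complex.mk (m/2*wr) (-(m/2*wi));
         Complex.mk (m/2*wr) (m/2*wi), ((m/2 : ℝ) : ℂ)] with hcdef
    have hc00 : c 0 0 = ((m/2 : ℝ) : ℂ) := by simp [hcdef]
    have hc11 : c 1 1 = ((m/2 : ℝ) : ℂ) := by simp [hcdef]
    have hc01 : c 0 1 = Complex.mk (m/2*wr) (-(m/2*wi)) := by simp [hcdef]
    have hc10 : c 1 0 = Complex.mk (m/2*wr) (m/2*wi) := by simp [hcdef]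
    have hc : c.PosSemidef := by
      refine psd2_mk hc00 hc11 ?_ (by positivity) (by positivity) ?_
      · rw [hc10, hc01]
        simp [Complex.ext_iff]
      · rw [hc01]
        simp [Complex.normSq_apply]
        refine le_of_eq ?_
        linear_combination (m^2/4) * hwn
    have hac : (a - c).PosSemidef := by
      have e00 : (a - c) 0 0 = (((1 + l 2 - m)/2 : ℝ) : ℂ) := by
        simp [Matrix.sub_apply, ha00, hc00, Complex.ext_iff]
        ring
      have e11 : (a - c) 1 1 = (((1 - l 2 - m)/2 : ℝ) : ℂ) := by
        simp [Matrix.sub_apply, ha11, hc11, Complex.ext_iff]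
        ring
      refine psd2_mk e00 e11 ?_ ?_ ?_ ?_
      · simp [Matrix.sub_apply, ha01, ha10, hc01, hc10, Complex.ext_iff]
        ring
      · rw [hm]; linarith [sq_nonneg (1 + l 2), sq_nonneg (l 0), sq_nonneg (l 1)]
      · rw [hm]; linarith [sq_nonneg (1 - l 2), sq_nonneg (l 0), sq_nonneg (l 1)]
      · have e01 : Complex.normSq ((a - c) 0 1) = (l 0^2 + l 1^2 + m^2)/4 := by
          simp [Matrix.sub_apply, ha01, hc01, Complex.normSq_apply]
          linear_combination (m^2/4) * hwn - (m/2) * hw0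
        rw [e01]
        refine le_of_eq ?_
        rw [hm]; ring
    have h1ac : ((1 : Matrix (Fin 2) (Fin 2) ℂ) - a - c).PosSemidef := by
      have e00 : ((1 : Matrix (Fin 2) (Fin 2) ℂ) - a - c) 0 0 = (((1 - l 2 - m)/2 : ℝ) : ℂ) := by
        simp [Matrix.sub_apply, Matrix.one_apply, ha00, hc00, Complex.ext_iff]
        ring
      have e11 : ((1 : Matrix (Fin 2) (Fin 2) ℂ) - a - c) 1 1 = (((1 + l 2 - m)/2 : ℝ) : ℂ) := by
        simp [Matrix.sub_apply, Matrix.one_apply, ha11, hc11, Complex.ext_iff]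
        ring
      refine psd2_mk e00 e11 ?_ ?_ ?_ ?_
      · simp [Matrix.sub_apply, Matrix.one_apply, ha01, ha10, hc01, hc10, Complex.ext_iff]
        ring
      · rw [hm]; linarith [sq_nonneg (1 - l 2), sq_nonneg (l 0), sq_nonneg (l 1)]
      · rw [hm]; linarith [sq_nonneg (1 + l 2), sq_nonneg (l 0), sq_nonneg (l 1)]
      · have e01 : Complex.normSq (((1 : Matrix (Fin 2) (Fin 2) ℂ) - a - c) 0 1)
            = (l 0^2 + l 1^2 + m^2)/4 := by
          simp [Matrix.sub_apply, Matrix.one_apply, ha01, hc01, Complex.normSq_apply]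
          linear_combination (m^2/4) * hwn + (m/2) * hw0
        rw [e01]
        refine le_of_eq ?_
        rw [hm]; ring
    have hg := H c hc (by exact hac) (by simpa [sub_sub] using h1ac)
    obtain ⟨_, _, _, hgp, _, hgdet⟩ := psd2_elim hg
    have eg00 : (((1 - α) • (1 : Matrix (Fin 2) (Fin 2) ℂ) - c) 0 0).re = 1 - α - m/2 := by
      simp [Matrix.sub_apply, Matrix.smul_apply, Matrix.one_apply, hc00, Complex.real_smul]
    have eg11 : (((1 - α) • (1 : Matrix (Fin 2) (Fin 2) ℂ) - c) 1 1).re = 1 - α - m/2 := by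
      simp [Matrix.sub_apply, Matrix.smul_apply, Matrix.one_apply, hc11, Complex.real_smul]
    have eg01 : Complex.normSq (((1 - α) • (1 : Matrix (Fin 2) (Fin 2) ℂ) - c) 0 1)
        = m^2/4 * (wr^2 + wi^2) := by
      simp [Matrix.sub_apply, Matrix.smul_apply, Matrix.one_apply, hc01, Complex.normSq_apply]
      ring
    rw [eg00] at hgp
    rw [eg00, eg11, eg01, hwn] at hgdet
    have hma : m ≤ 1 - α := by
      have h5 : (m/2)^2 ≤ (1 - α - m/2)^2 := by
        calc (m/2)^2 = m^2/4 * 1 := by ring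
          _ ≤ (1 - α - m/2) * (1 - α - m/2) := hgdet
          _ = (1 - α - m/2)^2 := by ring
      have := le_of_sq' h5 hgp
      linarith
    rw [hm] at hma
    linarith
  · -- the bound on α implies the sharpness condition
    intro hα c hc hac h1ac
    obtain ⟨hcc10, hcim0, hcim1, hcp, hcq, hcdet⟩ := psd2_elim hc
    obtain ⟨_, _, _, hacp, hacq, hacdet⟩ := psd2_elim hac
    obtain ⟨_, _, _, h1p, h1q, h1det⟩ := psd2_elim h1ac
    set p := (c 0 0).re with hpdef
    set q := (c 1 1).re with hqdef
    set zr := (c 0 1).re with hzrdef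
    set zi := (c 0 1).im with hzidef
    have e1 : ((a - c) 0 0).re = (1 + l 2)/2 - p := by
      simp [Matrix.sub_apply, ha00, Complex.sub_re, hpdef]
    have e2 : ((a - c) 1 1).re = (1 - l 2)/2 - q := by
      simp [Matrix.sub_apply, ha11, Complex.sub_re, hqdef]
    have e3 : Complex.normSq ((a - c) 0 1) = (l 0/2 - zr)^2 + (-(l 1)/2 - zi)^2 := by
      simp [Matrix.sub_apply, ha01, Complex.normSq_apply, Complex.sub_re, Complex.sub_im]
      ring
    have f1 : (((1 - a) - c) 0 0).re = (1 - l 2)/2 - p := by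
      simp [Matrix.sub_apply, Matrix.one_apply, ha00, Complex.sub_re]
      ring
    have f2 : (((1 - a) - c) 1 1).re = (1 + l 2)/2 - q := by
      simp [Matrix.sub_apply, Matrix.one_apply, ha11, Complex.sub_re]
      ring
    have f3 : Complex.normSq (((1 - a) - c) 0 1) = (-(l 0)/2 - zr)^2 + (l 1/2 - zi)^2 := by
      simp [Matrix.sub_apply, Matrix.one_apply, ha01, Complex.normSq_apply,
        Complex.sub_re, Complex.sub_im]
      ring
    rw [e1, e2, e3] at hacdet
    rw [f1, f2, f3] at h1det
    rw [e1] at hacp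
    rw [e2] at hacq
    rw [f1] at h1p
    rw [f2] at h1q
    rw [Complex.normSq_apply] at hcdet
    have hkey := key_scalar (l 2) ((l 0^2 + l 1^2)/4) p q (zr^2 + zi^2)
      ((l 0 * zr - l 1 * zi)/2)
      (by positivity) (by linarith) hcp hcq (by positivity) (by rw [hzrdef, hzidef, pow_two, pow_two]; exact hcdet)
      (by linarith) (by linarith) (by linarith) (by linarith)
      (by rw [show (l 0^2 + l 1^2)/4 + (zr^2 + zi^2) - 2*((l 0 * zr - l 1 * zi)/2)
          = (l 0/2 - zr)^2 + (-(l 1)/2 - zi)^2 from by ring]; exact hacdet)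
      (by rw [show (l 0^2 + l 1^2)/4 + (zr^2 + zi^2) + 2*((l 0 * zr - l 1 * zi)/2)
          = (-(l 0)/2 - zr)^2 + (l 1/2 - zi)^2 from by ring]; exact h1det)
    have hrw : (1 - (l 2)^2 - 4*((l 0^2 + l 1^2)/4))/2 = (1 - (l 0^2 + l 1^2 + l 2^2))/2 := by
      ring
    rw [hrw] at hkey
    obtain ⟨k1, k2, k3⟩ := hkey
    set M' : ℝ := (1 - (l 0^2 + l 1^2 + l 2^2))/2 with hM'
    have hαM : M' ≤ 1 - α := by rw [hM']; linarith
    have hc00' : c 0 0 = ((p : ℝ) : ℂ) := by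
      apply Complex.ext
      · simp [hpdef]
      · simp [hcim0]
    have hc11' : c 1 1 = ((q : ℝ) : ℂ) := by
      apply Complex.ext
      · simp [hqdef]
      · simp [hcim1]
    have g00 : ((1 - α) • (1 : Matrix (Fin 2) (Fin 2) ℂ) - c) 0 0 = ((1 - α - p : ℝ) : ℂ) := by
      rw [Matrix.sub_apply, Matrix.smul_apply, Matrix.one_apply_eq, hc00']
      rw [Complex.real_smul]
      push_cast
      ring
    have g11 : ((1 - α) • (1 : Matrix (Fin 2) (Fin 2) ℂ) - c) 1 1 = ((1 - α - q : ℝ) : ℂ) := by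
      rw [Matrix.sub_apply, Matrix.smul_apply, Matrix.one_apply_eq, hc11']
      rw [Complex.real_smul]
      push_cast
      ring
    refine psd2_mk g00 g11 ?_ (by linarith) (by linarith) ?_
    · simp [Matrix.sub_apply, Matrix.smul_apply, Matrix.one_apply, hcc10]
    · have : Complex.normSq (((1 - α) • (1 : Matrix (Fin 2) (Fin 2) ℂ) - c) 0 1)
          = zr^2 + zi^2 := by
        simp [Matrix.sub_apply, Matrix.smul_apply, Matrix.one_apply, Complex.normSq_apply]
        ring
      rw [this]
      have hprod2 : (0:ℝ) ≤ (1 - α - M') * ((1 - α - M') + (M' - p) + (M' - q)) :=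
        mul_nonneg (by linarith) (by linarith)
      have e : (1 - α - p)*(1 - α - q) - (M' - p)*(M' - q)
          = (1 - α - M') * ((1 - α - M') + (M' - p) + (M' - q)) := by ring
      linarith [k3, hprod2, e]
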